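/- Abstract modified interpolation operator (mechanism of Theorem 4.1): Let H be a real inner product space, and let B and D be finite-dimensional subspaces of H satisfying the inf-sup condition: there is c > 0 such that for every q ∈ D, sup{⟨v, q⟩ : v ∈ B, ‖v‖ ≤ 1} ≥ c‖q‖. Then for every f ∈ H and every w ∈ H (an arbitrary interpolant of f), there exists j ∈ H with j − w ∈ B such that ⟨f − j, q⟩ = 0 for all q ∈ D (orthogonality) and ‖f − j‖ ≤ (1 + 1/c)‖f − w‖ (approximation property). -/

import Mathlib

open MeasureTheory

/-- **Abstract modified interpolation operator** (mechanism of Theorem 4.1):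
let `H` be a real inner ℝ product space and `B`, `D` finite-dimensional subspaces
satisfying the inf-sup condition with constant `c > 0`. Then for every `f ∈ H`
and every `w ∈ H` (an arbitrary interpolant of `f`) there is `j ∈ H` with
`j - w ∈ B`, `⟪f - j, q⟫ = 0` for all `q ∈ D` (orthogonality), and
`‖f - j‖ ≤ (1 + 1/c) ‖f - w‖` (approximation property). -/
theorem abstract_modified_interpolation
    {H : Type*} [NormedAddCommGroup H] [InnerProductSpace ℝ H]
    (B D : Submodule ℝ H) [FiniteDimensional ℝ B] [FiniteDimensional ℝ D]
    (c : ℝ) (hc : 0 < c)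
    (hinfsup : ∀ q ∈ D,
      c * ‖q‖ ≤ sSup {r : ℝ | ∃ v ∈ B, ‖v‖ ≤ 1 ∧ r = (inner ℝ v q : ℝ)}) :
    ∀ f w : H, ∃ j : H, j - w ∈ B ∧ (∀ q ∈ D, (inner ℝ (f - j) q : ℝ) = 0) ∧
      ‖f - j‖ ≤ (1 + 1 / c) * ‖f - w‖ := by
  intro f w
  set u := f - w with hu
  -- Step 1: the inf-sup condition gives `c‖q‖ ≤ ‖P_B q‖` for `q ∈ D`.
  have key : ∀ q : H, q ∈ D → c * ‖q‖ ≤ ‖((Submodule.orthogonalProjectionOnto B q : B) : H)‖ := by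
    intro q hq
    refine le_trans (hinfsup q hq) (Real.sSup_le ?_ (norm_nonneg _))
    rintro r ⟨v, hvB, hv1, rfl⟩
    have hzero : (inner ℝ (q - ((Submodule.orthogonalProjectionOnto B q : B) : H)) v : ℝ) = 0 :=
      Submodule.starProjection_inner_eq_zero (K := B) q v hvB
    have h1 : (inner ℝ v q : ℝ) = inner ℝ v ((Submodule.orthogonalProjectionOnto B q : B) : H) := by
      have := hzero
      rw [inner_sub_left] at this
      linarith [real_inner_comm v q,
        real_inner_comm v ((Submodule.orthogonalProjectionOnto B q : B) : H)]
    calc (inner ℝ v q : ℝ) = inner ℝ v ((Submodule.orthogonalProjectionOnto B q : B) : H) := h1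
      _ ≤ ‖v‖ * ‖((Submodule.orthogonalProjectionOnto B q : B) : H)‖ := real_inner_le_norm _ _
      _ ≤ 1 * ‖((Submodule.orthogonalProjectionOnto B q : B) : H)‖ :=
          mul_le_mul_of_nonneg_right hv1 (norm_nonneg _)
      _ = ‖((Submodule.orthogonalProjectionOnto B q : B) : H)‖ := one_mul _
  -- Useful: for x : H and q ∈ B, ⟪P_B x, q⟫ = ⟪x, q⟫ (and similarly for D).
  have proj_eq : ∀ (K : Submodule ℝ H) [FiniteDimensional ℝ K] (x : H), ∀ q ∈ K,
      (inner ℝ ((Submodule.orthogonalProjectionOnto K x : K) : H) q : ℝ) = inner ℝ x q := by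
    intro K _ x q hq
    have hzero : (inner ℝ (x - ((Submodule.orthogonalProjectionOnto K x : K) : H)) q : ℝ) = 0 :=
      Submodule.starProjection_inner_eq_zero (K := K) x q hq
    rw [inner_sub_left] at hzero
    linarith
  -- Step 2: the operator T : D → D, p ↦ P_D (P_B p), is injective hence surjective.
  let T : D →ₗ[ℝ] D :=
    (Submodule.orthogonalProjectionOnto D).toLinearMap ∘ₗ B.subtype ∘ₗ
      (Submodule.orthogonalProjectionOnto B).toLinearMap ∘ₗ D.subtype
  have hT : ∀ p : D, ∀ q ∈ D, (inner ℝ ((T p : D) : H) q : ℝ)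
      = inner ℝ ((Submodule.orthogonalProjectionOnto B (p : H) : B) : H) q := by
    intro p q hq
    exact proj_eq D _ q hq
  have hTinj : Function.Injective T := by
    rw [← LinearMap.ker_eq_bot, LinearMap.ker_eq_bot']
    intro p hp
    have h1 : (inner ℝ ((Submodule.orthogonalProjectionOnto B (p : H) : B) : H) (p : H) : ℝ) = 0 := by
      have := hT p (p : H) p.2
      rw [hp] at this
      simpa using this.symm
    have h2 : (inner ℝ ((Submodule.orthogonalProjectionOnto B (p : H) : B) : H)
        ((Submodule.orthogonalProjectionOnto B (p : H) : B) : H) : ℝ) = 0 := by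
      have := proj_eq B (p : H) ((Submodule.orthogonalProjectionOnto B (p : H) : B) : H)
        (Submodule.orthogonalProjectionOnto B (p : H)).2
      rw [real_inner_comm] at h1
      rw [real_inner_comm ((Submodule.orthogonalProjectionOnto B (p : H) : B) : H)
        ((Submodule.orthogonalProjectionOnto B (p : H) : B) : H)] at this ⊢
      rw [this, h1]
    have h3 : ((Submodule.orthogonalProjectionOnto B (p : H) : B) : H) = 0 := by
      rwa [real_inner_self_eq_norm_sq, pow_eq_zero_iff (by norm_num), norm_eq_zero] at h2
    have h4 := key (p : H) p.2
    rw [h3, norm_zero] at h4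
    have hple : ‖(p : H)‖ ≤ 0 := by nlinarith [norm_nonneg (p : H)]
    have hp0 : (p : H) = 0 := norm_le_zero_iff.mp hple
    exact Subtype.ext (by simpa using hp0)
  have hTsurj : Function.Surjective T := by
    exact (LinearMap.injective_iff_surjective).mp hTinj
  -- Step 3: solve T p = P_D u and set b := P_B p.
  obtain ⟨p, hp⟩ := hTsurj (Submodule.orthogonalProjectionOnto D u)
  set b : H := ((Submodule.orthogonalProjectionOnto B (p : H) : B) : H) with hb
  have hbB : b ∈ B := (Submodule.orthogonalProjectionOnto B (p : H)).2
  -- orthogonality: ⟪b, q⟫ = ⟪u, q⟫ for q ∈ D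
  have horth : ∀ q ∈ D, (inner ℝ b q : ℝ) = inner ℝ u q := by
    intro q hq
    have h1 : (inner ℝ ((T p : D) : H) q : ℝ) = inner ℝ b q := hT p q hq
    have h2 : ((T p : D) : H) = ((Submodule.orthogonalProjectionOnto D u : D) : H) := by rw [hp]
    rw [h2] at h1
    rw [← h1]
    exact proj_eq D u q hq
  -- norm bound: ‖b‖ ≤ ‖u‖ / c
  have hbnorm : ‖b‖ ≤ ‖u‖ / c := by
    have hb2 : ‖b‖ ^ 2 = inner ℝ u (p : H) := by
      rw [← real_inner_self_eq_norm_sq]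
      have h1 : (inner ℝ b b : ℝ) = inner ℝ (p : H) b := proj_eq B (p : H) b hbB
      rw [h1, real_inner_comm]
      exact horth (p : H) p.2
    have h2 : ‖b‖ ^ 2 ≤ ‖u‖ * ‖(p : H)‖ := hb2 ▸ real_inner_le_norm u (p : H)
    have h3 : c * ‖(p : H)‖ ≤ ‖b‖ := key (p : H) p.2
    have h4 : ‖(p : H)‖ ≤ ‖b‖ / c := (le_div_iff₀ hc).mpr (by linarith)
    have h5 : ‖b‖ ^ 2 ≤ ‖u‖ * (‖b‖ / c) :=
      h2.trans (mul_le_mul_of_nonneg_left h4 (norm_nonneg _))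
    rcases eq_or_lt_of_le (norm_nonneg b) with h | h
    · rw [← h]; positivity
    · have : ‖b‖ * ‖b‖ ≤ (‖u‖ / c) * ‖b‖ := by
        rw [pow_two] at h5
        calc ‖b‖ * ‖b‖ ≤ ‖u‖ * (‖b‖ / c) := h5
          _ = (‖u‖ / c) * ‖b‖ := by ring
      exact le_of_mul_le_mul_right this h
  refine ⟨w + b, by simpa using hbB, ?_, ?_⟩
  · intro q hq
    have : f - (w + b) = u - b := by rw [hu]; abel
    rw [this, inner_sub_left, horth q hq]
    ring
  · have : f - (w + b) = u - b := by rw [hu]; abel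
    rw [this]
    calc ‖u - b‖ ≤ ‖u‖ + ‖b‖ := norm_sub_le _ _
      _ ≤ ‖u‖ + ‖u‖ / c := by linarith
      _ = (1 + 1 / c) * ‖u‖ := by field_simp
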